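/- If a lens satisfies both the PutSurjectivity law (∀ s ∈ S, ∃ s' ∈ S, ∃ v ∈ V, Put(s', v) = s) and the PutTwice law (∀ s ∈ S, ∀ v ∈ V, Put(Put(s, v), v) = Put(s, v)), then it satisfies the SourceStability law (∀ s ∈ S, ∃ v ∈ V, Put(s, v) = s). -/
import Mathlib

/-- PutSurjectivity and PutTwice imply SourceStability. -/
theorem putSurjectivity_putTwice_implies_sourceStability {S V : Type*} (Put : S → V → S)
    (hPS : ∀ s : S, ∃ s' : S, ∃ v : V, Put s' v = s)
    (hPT : ∀ s : S, ∀ v : V, Put (Put s v) v = Put s v) :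
    ∀ s : S, ∃ v : V, Put s v = s := by
  intro s
  obtain ⟨s', v, h⟩ := hPS s
  exact ⟨v, by rw [← h, hPT]⟩
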